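/- Let ε ∈ {1,2}^{p−1} and take δ = (0,…,0), so in the kernel L^ε_δ all p of the z-contours are circles about the origin with radii ρ_1, …, ρ_p ∈ (τ_1, 1−√q) ordered according to ε. If ε is not equal to ε^k = (2,…,2,1,…,1) (with k−1 entries equal to 2) for any 1 ≤ k ≤ p — equivalently, if there is no 1 ≤ k ≤ p with ρ_1 < ρ_2 < … < ρ_k and ρ_k > ρ_{k+1} > … > ρ_p — then L^ε_δ(i,j) = 0 for all 1 ≤ i, j ≤ N. -/

import Mathlib

open MeasureTheory ProbabilityTheory Complex
open scoped Real BigOperators Nat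

noncomputable section

/-- Forward difference operator `∇f(x) = f(x+1) − f(x)`. -/
def nab (f : ℤ → ℂ) : ℤ → ℂ := fun x => f (x + 1) - f x

/-- Inverse difference: `∇⁻¹f(x) = ∑_{y<x} f(y)` (a `tsum`; for functions vanishing
to the left of some integer this is the finite sum of the paper). -/
def nabInv (f : ℤ → ℂ) : ℤ → ℂ := fun x => ∑' y : {y : ℤ // y < x}, f y.1

/-- `∇^k` for `k : ℤ`. -/
def nabIter (k : ℤ) (f : ℤ → ℂ) : ℤ → ℂ :=
  if 0 ≤ k then nab^[k.toNat] f else nabInv^[(-k).toNat] f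

/-- The negative binomial weight `w_m(x)`. -/
def wgt (q : ℝ) (m : ℕ) : ℤ → ℂ := fun x =>
  if 0 ≤ x then ((x.toNat + m - 1).choose x.toNat : ℂ) * ((1 : ℂ) - (q : ℂ)) ^ m * (q : ℂ) ^ x
  else 0

/-- Component `x_k` (1-based) of a vector `x : Fin N → ℤ`. -/
def vcomp {N : ℕ} (x : Fin N → ℤ) (k : ℕ) : ℤ :=
  if h : k - 1 < N then x ⟨k - 1, h⟩ else 0

/-- 1-based access to a finite tuple, extended by `0` out of range. -/
def fext {d : ℕ} {α : Type*} [Zero α] (x : Fin d → α) : ℕ → α := fun k =>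
  if h : 1 ≤ k ∧ k ≤ d then x ⟨k - 1, by omega⟩ else 0

/-- The growth function `𝐆(m,n)` built from weights `w`. -/
def growth (w : ℕ → ℕ → ℕ) : ℕ → ℕ → ℕ
  | 0, _ => 0
  | _ + 1, 0 => 0
  | m + 1, n + 1 => max (growth w m (n + 1)) (growth w (m + 1) n) + w (m + 1) (n + 1)
  termination_by m n => m + n

/-- Normalized contour integral `(1/(2πi)) ∮_{|z−c|=R} f(z) dz` (counterclockwise circle). -/
def cint (c : ℂ) (R : ℝ) (f : ℂ → ℂ) : ℂ :=
  (2 * Real.pi * Complex.I)⁻¹ * (∮ z in C(c, R), f z)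

/-- Iterated normalized contour integrals with centers `c` and radii `R`. -/
def multiCintC : (k : ℕ) → (c : Fin k → ℂ) → (R : Fin k → ℝ) → ((Fin k → ℂ) → ℂ) → ℂ
  | 0, _, _, f => f ![]
  | k + 1, c, R, f =>
      cint (c 0) (R 0) fun z =>
        multiCintC k (fun t => c t.succ) (fun t => R t.succ) fun w => f (Fin.cons z w)

/-- `G*(w | n, m, a)`. -/
def Gstar (q : ℝ) (n m a : ℤ) (w : ℂ) : ℂ :=
  w ^ n * (1 - w) ^ (a + m) / (1 - w / (1 - (q : ℂ))) ^ m

/-- `G(w | n, m, a) = G*(w | n,m,a)/G*(1−√q | n,m,a)`. -/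
def Gfun (q : ℝ) (n m a : ℤ) (w : ℂ) : ℂ :=
  Gstar q n m a w / Gstar q n m a (1 - (Real.sqrt q : ℂ))

/-- The block index `r` such that `n_{r−1} < i ≤ n_r`. -/
def blockIdx (n : ℕ → ℕ) (i : ℕ) : ℕ := sInf {r : ℕ | i ≤ n r}

/-- `r* = min{r, p−1}` for the block of `i`. -/
def rstar (p : ℕ) (n : ℕ → ℕ) (i : ℕ) : ℕ := min (blockIdx n i) (p - 1)

/-- `m(i) = m_{r*}`. -/
def mOf (p : ℕ) (n m : ℕ → ℕ) (i : ℕ) : ℕ := m (rstar p n i)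

/-- `a(i) = a_{r*}`. -/
def aOf (p : ℕ) (n : ℕ → ℕ) (a : ℕ → ℤ) (i : ℕ) : ℤ := a (rstar p n i)

/-- `n(i) = n_{r*}`. -/
def nOf (p : ℕ) (n : ℕ → ℕ) (i : ℕ) : ℕ := n (rstar p n i)


/-- The kernel `L^ε_δ(i,j)`: a `(p+2)`-fold contour integral where the `z_k`-contour
is the circle `C_k` of radius `ρ_k` centered at `1` if `δ_k = 1` and at `0` if `δ_k = 0`. -/
def Ldelta (q : ℝ) (p : ℕ) (n m : ℕ → ℕ) (a : ℕ → ℤ) (τ1 τ2 : ℝ)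
    (δ : ℕ → ℕ) (ρ : ℕ → ℝ) (i j : ℕ) : ℂ :=
  cint 0 τ1 (fun ζ1 => cint 0 τ2 (fun ζ2 =>
    multiCintC p (fun t => if δ (t.1 + 1) = 1 then 1 else 0) (fun t => ρ (t.1 + 1))
      (fun zv =>
        ((∏ k ∈ Finset.Icc 1 p,
            Gfun q ((n k : ℤ) - n (k - 1)) ((m k : ℤ) - m (k - 1)) (a k - a (k - 1))
              (fext zv k))
          * (∏ k ∈ Finset.Icc 1 (p - 1), (fext zv k - fext zv (k + 1))⁻¹)
          * ((1 - ζ1) / (1 - fext zv 1)))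
        / (Gfun q (i : ℤ) (mOf p n m i : ℤ) (aOf p n a i) ζ1
           * Gfun q ((n p : ℤ) - j + 1) ((m p : ℤ) - mOf p n m j) (a p - aOf p n a j) ζ2
           * ((fext zv 1 - ζ1) * (fext zv p - ζ2))))))

lemma cint_congr {c : ℂ} {R : ℝ} (hR : 0 ≤ R) {f g : ℂ → ℂ}
    (h : ∀ z ∈ Metric.sphere c R, f z = g z) : cint c R f = cint c R g := by
  unfold cint
  rw [circleIntegral.integral_congr hR h]

lemma cint_zero (c : ℂ) (R : ℝ) : cint c R (fun _ => 0) = 0 := by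
  simp [cint, circleIntegral]

lemma cint_eqOn_zero {c : ℂ} {R : ℝ} (hR : 0 ≤ R) {f : ℂ → ℂ}
    (h : ∀ z ∈ Metric.sphere c R, f z = 0) : cint c R f = 0 := by
  rw [cint_congr hR (g := fun _ => 0) h, cint_zero]

lemma cint_const_mul (c : ℂ) (R : ℝ) (a : ℂ) (f : ℂ → ℂ) :
    cint c R (fun z => a * f z) = a * cint c R f := by
  unfold cint
  simp only [← smul_eq_mul (a := a), circleIntegral.integral_smul]
  simp [smul_eq_mul]; ring

lemma multi_zero : ∀ (k : ℕ) (c : Fin k → ℂ) (R : Fin k → ℝ),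
    multiCintC k c R (fun _ => 0) = 0
  | 0, _, _ => rfl
  | k + 1, c, R => by
      show cint _ _ _ = 0
      simp only [multi_zero k]
      exact cint_zero _ _

lemma multi_congr : ∀ (k : ℕ) (c : Fin k → ℂ) (R : Fin k → ℝ), (∀ t, 0 ≤ R t) →
    ∀ {f g : (Fin k → ℂ) → ℂ},
    (∀ zv : Fin k → ℂ, (∀ t, zv t ∈ Metric.sphere (c t) (R t)) → f zv = g zv) →
    multiCintC k c R f = multiCintC k c R g
  | 0, _, _, _, f, g, h => h ![] (fun t => t.elim0)
  | k + 1, c, R, hR, f, g, h => by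
      show cint _ _ _ = cint _ _ _
      refine cint_congr (hR 0) (fun z hz => ?_)
      refine multi_congr k _ _ (fun t => hR t.succ) (fun zv hzv => ?_)
      refine h (Fin.cons z zv) (fun t => ?_)
      refine Fin.cases ?_ ?_ t
      · simpa using hz
      · intro u; simpa using hzv u

lemma multi_const_mul : ∀ (k : ℕ) (c : Fin k → ℂ) (R : Fin k → ℝ) (a : ℂ)
    (f : (Fin k → ℂ) → ℂ),
    multiCintC k c R (fun v => a * f v) = a * multiCintC k c R f
  | 0, _, _, _, _ => rfl
  | k + 1, c, R, a, f => by
      show cint _ _ _ = a * cint _ _ _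
      rw [← cint_const_mul]
      congr 1; funext z
      exact multi_const_mul k _ _ a _

def finIns {k : ℕ} (hk : 0 < k) (z : ℂ) (w : Fin (k - 1) → ℂ) : Fin k → ℂ :=
  fun i => if h : i.1 = 0 then z else w ⟨i.1 - 1, by omega⟩

lemma multi_eq_of_pos (k : ℕ) (hk : 0 < k) (c : Fin k → ℂ) (R : Fin k → ℝ)
    (f : (Fin k → ℂ) → ℂ) :
    multiCintC k c R f = cint (c ⟨0, hk⟩) (R ⟨0, hk⟩)
      (fun z => multiCintC (k - 1) (fun u => c ⟨u.1 + 1, by omega⟩)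
        (fun u => R ⟨u.1 + 1, by omega⟩) (fun w => f (finIns hk z w))) := by
  match k with
  | 0 => omega
  | k + 1 =>
    show cint _ _ _ = cint _ _ _
    congr 1
    funext z
    congr 1
    funext w
    congr 1
    funext i
    refine Fin.cases ?_ ?_ i
    · simp [finIns]
    · intro u
      simp [finIns, Fin.cons]


lemma fcongr {n : ℕ} {α : Sort*} (x : Fin n → α) {a b : ℕ} (ha : a < n) (hb : b < n)
    (h : a = b) : x ⟨a, ha⟩ = x ⟨b, hb⟩ := by subst h; rfl

def merge {j : ℕ} (zv : Fin j → ℂ) (d : ℕ) (w : Fin (j - d) → ℂ) : Fin j → ℂ :=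
  fun i => if h : i.1 < d then zv i else w ⟨i.1 - d, by omega⟩

set_option maxHeartbeats 1000000 in

lemma multi_peel : ∀ (d j : ℕ), d ≤ j → ∀ (c : Fin j → ℂ) (R : Fin j → ℝ),
    (∀ t, 0 ≤ R t) → ∀ f : (Fin j → ℂ) → ℂ,
    (∀ zv : Fin j → ℂ, (∀ t : Fin j, t.1 < d → zv t ∈ Metric.sphere (c t) (R t)) →
      multiCintC (j - d) (fun u => c ⟨u.1 + d, by omega⟩) (fun u => R ⟨u.1 + d, by omega⟩)
        (fun w => f (merge zv d w)) = 0) →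
    multiCintC j c R f = 0 := by
  intro d
  induction d with
  | zero =>
    intro j hdj c R hR f h
    exact h (fun _ => 0) (fun t ht => absurd ht (by omega))
  | succ d ih =>
    intro j hdj c R hR f h
    refine ih j (by omega) c R hR f (fun zv hzv => ?_)
    rw [multi_eq_of_pos (j - d) (by omega)]
    refine cint_eqOn_zero (hR _) (fun z hz => ?_)
    have key := h (Function.update zv ⟨d, by omega⟩ z) ?_
    · convert key using 2
      · omega
      · funext u
        exact fcongr c _ _ (show u.1 + 1 + d = u.1 + (d + 1) by omega)
      · funext u
        exact fcongr R _ _ (show u.1 + 1 + d = u.1 + (d + 1) by omega)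
      · funext w
        congr 1
        funext i
        simp only [merge, finIns]
        by_cases h1 : i.1 < d
        · rw [dif_pos h1, dif_pos (by omega : i.1 < d + 1),
            Function.update_of_ne (Fin.ne_of_val_ne (show i.1 ≠ d by omega))]
        · by_cases h2 : i.1 = d
          · rw [dif_neg h1, dif_pos (by omega : i.1 < d + 1)]
            rw [dif_pos (show i.1 - d = 0 by omega)]
            have hid : i = ⟨d, by omega⟩ := Fin.ext h2
            rw [hid, Function.update_self]
          · rw [dif_neg h1, dif_neg (show ¬ i.1 < d + 1 by omega),
              dif_neg (show ¬ i.1 - d = 0 by omega)]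
            exact fcongr w _ _ (by omega)
    · intro t ht
      by_cases h1 : t.1 < d
      · rw [Function.update_of_ne (Fin.ne_of_val_ne (show t.1 ≠ d by omega))]
        exact hzv t h1
      · have ht' : t = ⟨d, by omega⟩ := Fin.ext (show t.1 = d by omega)
        rw [ht', Function.update_self]
        convert hz using 2
        · exact fcongr c _ _ (show d = 0 + d by omega)
        · exact fcongr R _ _ (show d = 0 + d by omega)


lemma cont_cint {X : Type*} [TopologicalSpace X] (c : ℂ) (R : ℝ) (f : X → ℂ → ℂ)
    (hf : Continuous fun p : X × ℝ => f p.1 (circleMap c R p.2)) :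
    Continuous fun x => cint c R (f x) := by
  have hrw : ∀ x, cint c R (f x) = (2 * Real.pi * Complex.I)⁻¹ *
      ∫ θ in (0:ℝ)..(2 * Real.pi),
        (circleMap 0 R θ * Complex.I) • f x (circleMap c R θ) := by
    intro x
    unfold cint circleIntegral
    simp only [deriv_circleMap]
  simp only [hrw]
  refine continuous_const.mul ?_
  refine intervalIntegral.continuous_parametric_intervalIntegral_of_continuous' ?_ _ _
  show Continuous fun p : X × ℝ => (circleMap 0 R p.2 * Complex.I) • f p.1 (circleMap c R p.2)
  exact ((continuous_circleMap 0 R).comp continuous_snd |>.mul continuous_const).smul hf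

lemma cont_multi : ∀ (k : ℕ) (c : Fin k → ℂ) (R : Fin k → ℝ) {X : Type*} [TopologicalSpace X]
    (F : X → (Fin k → ℂ) → ℂ)
    (hF : Continuous fun p : X × (Fin k → ℝ) =>
      F p.1 (fun t => circleMap (c t) (R t) (p.2 t))),
    Continuous fun x => multiCintC k c R (F x)
  | 0, c, R, X, _, F, hF => by
    show Continuous fun x => F x ![]
    have : Continuous fun x : X => (x, (fun _ => 0 : Fin 0 → ℝ)) :=
      continuous_id.prodMk continuous_const
    have h2 := hF.comp this
    exact h2.congr fun x => congrArg (F x) (funext fun t => t.elim0)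
  | k + 1, c, R, X, _, F, hF => by
    show Continuous fun x => cint (c 0) (R 0) (fun z =>
      multiCintC k (fun t => c t.succ) (fun t => R t.succ) (fun w => F x (Fin.cons z w)))
    refine cont_cint (c 0) (R 0) _ ?_
    have := cont_multi k (fun t => c t.succ) (fun t => R t.succ) (X := X × ℝ)
      (fun p w => F p.1 (Fin.cons (circleMap (c 0) (R 0) p.2) w)) ?_
    · exact this
    · -- continuity of the composed map
      have hco : Continuous fun p : (X × ℝ) × (Fin k → ℝ) =>
          (p.1.1, (Fin.cons p.1.2 p.2 : Fin (k+1) → ℝ)) := by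
        refine (continuous_fst.comp continuous_fst).prodMk (continuous_pi fun t => ?_)
        refine Fin.cases ?_ ?_ t
        · exact continuous_snd.comp continuous_fst
        · intro u
          simp only [Fin.cons_succ]
          exact (continuous_apply u).comp continuous_snd
      have h2 := hF.comp hco
      refine h2.congr fun p => congrArg (F p.1.1) (funext fun t => ?_)
      refine Fin.cases ?_ (fun u => ?_) t <;> simp

lemma sqrt_facts {q : ℝ} (hq0 : 0 < q) (hq1 : q < 1) :
    q < Real.sqrt q ∧ Real.sqrt q < 1 := by
  constructor
  · exact (Real.lt_sqrt hq0.le).mpr (by nlinarith)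
  · rw [show (1:ℝ) = Real.sqrt 1 by simp]
    exact Real.sqrt_lt_sqrt hq0.le hq1

lemma one_sub_div_ne {q : ℝ} (hq0 : 0 < q) (hq1 : q < 1) {z : ℂ} (hz : ‖z‖ < 1 - q) :
    (1 : ℂ) - z / (1 - (q : ℂ)) ≠ 0 := by
  intro h
  have hq : (1 : ℂ) - (q : ℂ) ≠ 0 := by
    intro h'
    have : (q : ℂ) = 1 := by linear_combination -h'
    have : q = 1 := by exact_mod_cast this
    linarith
  have hzeq : z = 1 - (q : ℂ) := by
    field_simp at h
    linear_combination -h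
  rw [hzeq] at hz
  have : ‖(1 : ℂ) - (q : ℂ)‖ = 1 - q := by
    rw [show (1 : ℂ) - (q : ℂ) = ((1 - q : ℝ) : ℂ) by push_cast; ring]
    rw [Complex.norm_real]
    exact abs_of_pos (by linarith)
  rw [this] at hz
  linarith

lemma Gstar_diffAt {q : ℝ} (hq0 : 0 < q) (hq1 : q < 1) (n m a : ℤ) (hn : 0 ≤ n)
    {z : ℂ} (hz1 : ‖z‖ < 1) (hzq : ‖z‖ < 1 - q) :
    DifferentiableAt ℂ (Gstar q n m a) z := by
  have h1 : (1 : ℂ) - z ≠ 0 := by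
    intro h
    have : z = 1 := by linear_combination -h
    rw [this] at hz1; simp at hz1
  have h2 := one_sub_div_ne hq0 hq1 hzq
  have d1 : DifferentiableAt ℂ (fun w : ℂ => w ^ n) z :=
    differentiableAt_zpow.mpr (Or.inr hn)
  have d2 : DifferentiableAt ℂ (fun w : ℂ => (1 - w) ^ (a + m)) z :=
    ((differentiableAt_const (1:ℂ)).sub differentiableAt_id).zpow (Or.inl h1)
  have d3 : DifferentiableAt ℂ (fun w : ℂ => (1 - w / (1 - (q:ℂ))) ^ m) z :=
    ((differentiableAt_const (1:ℂ)).sub (differentiableAt_id.div_const _)).zpow (Or.inl h2)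
  exact ((d1.mul d2).div d3 (zpow_ne_zero m h2))

lemma Gfun_diffAt {q : ℝ} (hq0 : 0 < q) (hq1 : q < 1) (n m a : ℤ) (hn : 0 ≤ n)
    {z : ℂ} (hz1 : ‖z‖ < 1) (hzq : ‖z‖ < 1 - q) :
    DifferentiableAt ℂ (Gfun q n m a) z :=
  (Gstar_diffAt hq0 hq1 n m a hn hz1 hzq).div_const _

lemma cint_neg (c : ℂ) (R : ℝ) (f : ℂ → ℂ) :
    (∮ z in C(c, R), -(f z)) = -(∮ z in C(c, R), f z) := by
  unfold circleIntegral
  simp [intervalIntegral.integral_neg]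

set_option maxHeartbeats 1000000 in

lemma key_vanish {q : ℝ} (hq0 : 0 < q) (hq1 : q < 1) (n m a : ℤ) (hn : 0 ≤ n)
    {r rp : ℝ} {A : ℂ} (hr : 0 < r) (hr1 : r < 1 - Real.sqrt q) (hA : r < ‖A‖)
    (hrp : r < rp) {H : ℂ → ℂ} (hH : CircleIntegrable H 0 rp) :
    cint 0 r (fun z => Gfun q n m a z * ((A - z)⁻¹ *
      cint 0 rp (fun w => (z - w)⁻¹ * H w))) = 0 := by
  obtain ⟨hqs, hs1⟩ := sqrt_facts hq0 hq1
  have hrq : r < 1 - q := by linarith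
  have hrp0 : 0 < rp := lt_trans hr hrp
  set K : ℂ → ℂ := fun z => cint 0 rp (fun w => (z - w)⁻¹ * H w) with hK
  -- K is differentiable on ball 0 rp
  have hKdiff : ∀ z ∈ Metric.ball (0:ℂ) rp, DifferentiableAt ℂ K z := by
    set Rnn : NNReal := ⟨rp, hrp0.le⟩ with hRnn
    have hH' : CircleIntegrable H 0 (Rnn : ℝ) := hH
    have hFP := hasFPowerSeriesOn_cauchy_integral (f := H) (c := 0) hH'
      (by exact_mod_cast hrp0)
    have hFd : DifferentiableOn ℂ
        (fun w => (2 * Real.pi * Complex.I : ℂ)⁻¹ •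
          ∮ z in C(0, (Rnn:ℝ)), (z - w)⁻¹ • H z) (Metric.ball (0:ℂ) rp) := by
      have := hFP.differentiableOn
      rwa [Metric.emetric_ball_nnreal] at this
    simp only [hRnn, NNReal.coe_mk] at hFd
    have hKeq : K = fun z => -((fun w => (2 * Real.pi * Complex.I : ℂ)⁻¹ •
        ∮ u in C(0, rp), (u - w)⁻¹ • H u) z) := by
      funext z
      show cint 0 rp (fun w => (z - w)⁻¹ * H w) = _
      unfold cint
      have : (fun w => (z - w)⁻¹ * H w) = fun w => -((w - z)⁻¹ • H w) := by
        funext w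
        rw [smul_eq_mul, ← neg_mul, ← inv_neg, neg_sub]
      rw [this, cint_neg]
      simp only [smul_eq_mul, NNReal.coe_mk]
      ring
    intro z hz
    rw [hKeq]
    exact ((hFd z hz).differentiableAt (Metric.isOpen_ball.mem_nhds hz)).neg
  -- the full integrand is differentiable on the closed ball
  have hdAll : ∀ z ∈ Metric.closedBall (0:ℂ) r,
      DifferentiableAt ℂ (fun z => Gfun q n m a z * ((A - z)⁻¹ * K z)) z := by
    intro z hz
    rw [mem_closedBall_zero_iff] at hz
    have hz1 : ‖z‖ < 1 := by linarith
    have hzq : ‖z‖ < 1 - q := by linarith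
    have dG := Gfun_diffAt hq0 hq1 n m a hn hz1 hzq
    have dA : DifferentiableAt ℂ (fun z : ℂ => (A - z)⁻¹) z := by
      refine ((differentiableAt_const A).sub differentiableAt_id).inv ?_
      intro h
      simp only [Pi.sub_apply, id_eq] at h
      have : A = z := by linear_combination h
      rw [this] at hA; linarith
    have dK : DifferentiableAt ℂ K z :=
      hKdiff z (by rw [mem_ball_zero_iff]; linarith)
    exact dG.mul (dA.mul dK)
  show cint 0 r (fun z => Gfun q n m a z * ((A - z)⁻¹ * K z)) = 0
  unfold cint
  rw [circleIntegral_eq_zero_of_differentiable_on_off_countable hr.le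
    Set.countable_empty
    (fun z hz => (hdAll z hz).continuousAt.continuousWithinAt)
    (fun z hz => hdAll z (Metric.ball_subset_closedBall hz.1))]
  ring


lemma Ioc_pred_singleton {s : ℕ} (hs : 1 ≤ s) : Finset.Ioc (s-1) s = {s} := by
  ext x; simp [Finset.mem_Ioc]; omega

lemma prod_Icc_split (g : ℕ → ℂ) (a s P : ℕ) (ha : 1 ≤ a) (h1 : a ≤ s) (h2 : s ≤ P) :
    ∏ k ∈ Finset.Icc a P, g k =
      ((∏ k ∈ Finset.Icc a (s-1), g k) * g s) * ∏ k ∈ Finset.Icc (s+1) P, g k := by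
  have e0 : ∀ b c : ℕ, 1 ≤ b → Finset.Icc b c = Finset.Ioc (b-1) c := by
    intro b c hb; ext x; simp [Finset.mem_Ioc]; omega
  rw [e0 a P ha, e0 a (s-1) ha, e0 (s+1) P (by omega)]
  have h3 : a - 1 ≤ s - 1 := by omega
  have h4 : s - 1 ≤ s := by omega
  have h5 : s ≤ P := h2
  rw [show (s + 1 - 1) = s by omega]
  rw [← Finset.prod_Ioc_consecutive g h3 (le_trans h4 h5)]
  rw [← Finset.prod_Ioc_consecutive g h4 h5]
  rw [Ioc_pred_singleton (le_trans h1 (le_refl s) |>.trans' ha), Finset.prod_singleton]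
  ring

lemma multi_vanish_of (k : ℕ) (hk : 0 < k) (c : Fin k → ℂ) (R : Fin k → ℝ)
    (c0 : ℂ) (R0 : ℝ) (c' : Fin (k-1) → ℂ) (R' : Fin (k-1) → ℝ)
    (hc0 : c ⟨0, hk⟩ = c0) (hR0 : R ⟨0, hk⟩ = R0)
    (hc' : ∀ u : Fin (k-1), c ⟨u.1+1, by omega⟩ = c' u)
    (hR' : ∀ u : Fin (k-1), R ⟨u.1+1, by omega⟩ = R' u)
    (f : (Fin k → ℂ) → ℂ)
    (h : cint c0 R0 (fun z => multiCintC (k-1) c' R' (fun w => f (finIns hk z w))) = 0) :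
    multiCintC k c R f = 0 := by
  rw [multi_eq_of_pos k hk, hc0, hR0, funext hc', funext hR']
  exact h

lemma fext_eval {d : ℕ} (x : Fin d → ℂ) (k : ℕ) (h1 : 1 ≤ k) (h2 : k ≤ d) :
    fext x k = x ⟨k-1, by omega⟩ := dif_pos ⟨h1, h2⟩

lemma fext_finIns_one {k : ℕ} (hk : 0 < k) (w1 : ℂ) (v : Fin (k-1) → ℂ) :
    fext (finIns hk w1 v) 1 = w1 := by
  rw [fext_eval _ 1 le_rfl hk]
  unfold finIns
  simp

lemma fext_finIns_eval {k : ℕ} (hk : 0 < k) (z : ℂ) (w : Fin (k-1) → ℂ) (k' : ℕ)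
    (h1 : 2 ≤ k') (h2 : k' ≤ k) : fext (finIns hk z w) k' = fext w (k' - 1) := by
  rw [fext_eval _ k' (by omega) h2, fext_eval _ (k'-1) (by omega) (by omega)]
  unfold finIns
  rw [dif_neg (show ¬ (k'-1 = 0) by omega)]

lemma fext_merge_low {p t : ℕ} (zv : Fin p → ℂ) (g : Fin (p - t) → ℂ) (k : ℕ)
    (h1 : 1 ≤ k) (h2 : k ≤ t) (h3 : t ≤ p) :
    fext (merge zv t g) k = fext zv k := by
  rw [fext_eval _ k h1 (by omega), fext_eval _ k h1 (by omega)]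
  unfold merge
  rw [dif_pos (show k - 1 < t by omega)]

lemma fext_merge_mid {p t : ℕ} (zv : Fin p → ℂ) (hpt : 0 < p - t) (z : ℂ)
    (w : Fin (p - t - 1) → ℂ) (h2 : t + 1 ≤ p) :
    fext (merge zv t (finIns hpt z w)) (t+1) = z := by
  rw [fext_eval _ (t+1) (by omega) (by omega)]
  unfold merge
  rw [dif_neg (show ¬ (t+1-1 < t) by omega)]
  unfold finIns
  rw [dif_pos (show t+1-1-t = 0 by omega)]

lemma fext_merge_high {p t : ℕ} (zv : Fin p → ℂ) (hpt : 0 < p - t) (z : ℂ)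
    (w : Fin (p - t - 1) → ℂ) (k : ℕ) (h1 : t + 2 ≤ k) (h2 : k ≤ p) :
    fext (merge zv t (finIns hpt z w)) k = fext w (k - t - 1) := by
  rw [fext_eval _ k (by omega) h2, fext_eval _ (k-t-1) (by omega) (by omega)]
  unfold merge
  rw [dif_neg (show ¬ (k-1 < t) by omega)]
  unfold finIns
  rw [dif_neg (show ¬ (k-1-t = 0) by omega)]
  exact fcongr w _ _ (show k-1-t-1 = k-t-1-1 by omega)

lemma hsplit_eval (g gz gw : ℕ → ℂ) (t p : ℕ) (h1 : 1 ≤ t) (h2 : t + 2 ≤ p)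
    (hlow : ∀ k, 1 ≤ k → k ≤ t → g k = gz k)
    (hhigh : ∀ k, t+2 ≤ k → k ≤ p → g k = gw k) :
    ∏ k ∈ Finset.Icc 1 p, g k
      = ((∏ k ∈ Finset.Icc 1 t, gz k) * g (t+1)) * ∏ k ∈ Finset.Icc (t+2) p, gw k := by
  rw [prod_Icc_split g 1 (t+1) p le_rfl (by omega) (by omega)]
  simp only [Nat.add_sub_cancel]
  rw [show t+1+1 = t+2 from rfl]
  rw [Finset.prod_congr rfl (fun k hk => by
    simp only [Finset.mem_Icc] at hk; exact hlow k hk.1 hk.2)]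
  rw [Finset.prod_congr (rfl : Finset.Icc (t+2) p = _) (fun k hk => by
    simp only [Finset.mem_Icc] at hk; exact hhigh k hk.1 hk.2)]

lemma hsplit_eval2 (g gz gw : ℕ → ℂ) (t P : ℕ) (h1 : 1 ≤ t) (h2 : t + 1 ≤ P)
    (hlow : ∀ k, 1 ≤ k → k ≤ t - 1 → g k = gz k)
    (hhigh : ∀ k, t+2 ≤ k → k ≤ P → g k = gw k) :
    ∏ k ∈ Finset.Icc 1 P, g k
      = ((∏ k ∈ Finset.Icc 1 (t-1), gz k) * (g t * g (t+1)))
          * ∏ k ∈ Finset.Icc (t+2) P, gw k := by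
  rw [prod_Icc_split g 1 t P le_rfl (by omega) (by omega)]
  rw [prod_Icc_split g (t+1) (t+1) P (by omega) le_rfl (by omega)]
  simp only [Nat.add_sub_cancel]
  rw [show t+1+1 = t+2 from rfl]
  rw [Finset.Icc_eq_empty (show ¬ (t+1 ≤ t) by omega), Finset.prod_empty]
  rw [Finset.prod_congr rfl (fun k hk => by
    simp only [Finset.mem_Icc] at hk; exact hlow k hk.1 hk.2)]
  rw [Finset.prod_congr (rfl : Finset.Icc (t+2) P = _) (fun k hk => by
    simp only [Finset.mem_Icc] at hk; exact hhigh k hk.1 hk.2)]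
  ring

lemma ne_of_norm_ne {x y : ℂ} (h : ‖x‖ ≠ ‖y‖) : x ≠ y := fun he => h (by rw [he])

set_option maxHeartbeats 1000000 in
lemma step_vanish {q : ℝ} (hq0 : 0 < q) (hq1 : q < 1) (n m a : ℤ) (hn : 0 ≤ n)
    (r rp : ℝ) (A CC : ℂ) (hr : 0 < r) (hr1 : r < 1 - Real.sqrt q) (hA : r < ‖A‖)
    (hrp : r < rp) (k : ℕ) (hk : 0 < k) (c' : Fin k → ℂ) (R' : Fin k → ℝ)
    (hc0 : c' ⟨0, hk⟩ = 0) (hR0 : R' ⟨0, hk⟩ = rp)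
    (PSI : (Fin k → ℂ) → ℂ)
    (hH : CircleIntegrable (fun w1 => multiCintC (k-1)
        (fun u => c' ⟨u.1+1, by omega⟩) (fun u => R' ⟨u.1+1, by omega⟩)
        (fun v => PSI (finIns hk w1 v))) 0 rp)
    (G : ℂ → (Fin k → ℂ) → ℂ)
    (hfact : ∀ z w, G z w
      = ((CC * (Gfun q n m a z * (A - z)⁻¹)) * (z - fext w 1)⁻¹) * PSI w) :
    cint 0 r (fun z => multiCintC k c' R' (G z)) = 0 := by
  set HH : ℂ → ℂ := fun w1 => multiCintC (k-1)
      (fun u => c' ⟨u.1+1, by omega⟩) (fun u => R' ⟨u.1+1, by omega⟩)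
      (fun v => PSI (finIns hk w1 v)) with hHH
  have e1 : ∀ z, multiCintC k c' R' (G z)
      = CC * (Gfun q n m a z * ((A - z)⁻¹ *
          cint 0 rp (fun w1 => (z - w1)⁻¹ * HH w1))) := by
    intro z
    rw [multi_eq_of_pos k hk, hc0, hR0]
    have e2 : ∀ w1 : ℂ, multiCintC (k-1) (fun u => c' ⟨u.1+1, by omega⟩)
        (fun u => R' ⟨u.1+1, by omega⟩) (fun v => G z (finIns hk w1 v))
        = ((CC * (Gfun q n m a z * (A - z)⁻¹)) * (z - w1)⁻¹) * HH w1 := by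
      intro w1
      rw [show (fun v => G z (finIns hk w1 v))
          = fun v => (((CC * (Gfun q n m a z * (A - z)⁻¹)) * (z - w1)⁻¹) *
              PSI (finIns hk w1 v)) from funext fun v => by
            rw [hfact, fext_finIns_one]]
      exact multi_const_mul _ _ _ _ _
    rw [funext e2]
    rw [show (fun w1 => ((CC * (Gfun q n m a z * (A - z)⁻¹)) * (z - w1)⁻¹) * HH w1)
        = fun w1 => (CC * (Gfun q n m a z * (A - z)⁻¹)) * ((z - w1)⁻¹ * HH w1)
        from funext fun w1 => by ring]
    rw [cint_const_mul]
    ring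
  rw [funext e1, cint_const_mul]
  rw [key_vanish hq0 hq1 n m a hn hr hr1 hA hrp hH, mul_zero]

lemma combi (p : ℕ) (hp : 2 ≤ p) (e : ℕ → ℕ)
    (he : ∀ k ∈ Finset.Icc 1 (p - 1), e k = 1 ∨ e k = 2)
    (hne : ¬ ∃ k ∈ Finset.Icc 1 p,
      ∀ u ∈ Finset.Icc 1 (p - 1), e u = if u < k then 2 else 1) :
    ∃ t, 1 ≤ t ∧ t + 2 ≤ p ∧ e t = 1 ∧ e (t + 1) = 2 := by
  by_contra hcon
  push_neg at hcon
  apply hne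
  by_cases hall : ∀ u ∈ Finset.Icc 1 (p-1), e u = 2
  · refine ⟨p, by simp [Finset.mem_Icc]; omega, fun u hu => ?_⟩
    simp only [Finset.mem_Icc] at hu
    rw [if_pos (by omega)]
    exact hall u (by simp [Finset.mem_Icc]; omega)
  · push_neg at hall
    obtain ⟨u0, hu0mem, hu0⟩ := hall
    have hex : ∃ u, 1 ≤ u ∧ u ≤ p-1 ∧ e u = 1 := by
      refine ⟨u0, ?_, ?_, (he u0 hu0mem).resolve_right hu0⟩
      · exact (Finset.mem_Icc.mp hu0mem).1
      · exact (Finset.mem_Icc.mp hu0mem).2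
    obtain ⟨ht01, ht02, ht03⟩ := Nat.find_spec hex
    set t0 := Nat.find hex with ht0def
    have hmin : ∀ u, u < t0 → ¬(1 ≤ u ∧ u ≤ p-1 ∧ e u = 1) :=
      fun u hu => Nat.find_min hex hu
    have hup : ∀ u, t0 ≤ u → u ≤ p-1 → e u = 1 := by
      intro u hu
      induction u, hu using Nat.le_induction with
      | base => intro _; exact ht03
      | succ nn hnn ih =>
        intro hle
        have h1 : e nn = 1 := ih (by omega)
        have h2 := hcon nn (by omega) (by omega) h1
        exact (he (nn+1) (by simp [Finset.mem_Icc]; omega)).resolve_right h2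
    refine ⟨t0, by simp [Finset.mem_Icc]; omega, fun u hu => ?_⟩
    simp only [Finset.mem_Icc] at hu
    by_cases h : u < t0
    · rw [if_pos h]
      rcases he u (by simp [Finset.mem_Icc]; omega) with h' | h'
      · exact absurd ⟨hu.1, hu.2, h'⟩ (hmin u h)
      · exact h'
    · rw [if_neg h]
      exact hup u (by omega) hu.2

set_option maxHeartbeats 2000000 in
lemma PSI_cont (q τ1 τ2 : ℝ) (hq0 : 0 < q) (hq1 : q < 1) (hτ2 : 0 < τ2) (hτ21 : τ2 < τ1)
    (p t : ℕ) (ht1 : 1 ≤ t) (ht2 : t + 2 ≤ p)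
    (n m : ℕ → ℕ) (a : ℕ → ℤ) (hnmono : ∀ k ∈ Finset.Icc 1 (p-1), n k < n (k+1))
    (ρ : ℕ → ℝ) (hρb : ∀ k, 1 ≤ k → k ≤ p → τ1 < ρ k ∧ ρ k < 1 - Real.sqrt q)
    (hadj : ∀ k, 1 ≤ k → k ≤ p - 1 → ρ k ≠ ρ (k+1))
    (ζ2 : ℂ) (hζ2 : ‖ζ2‖ = τ2)
    (hk2 : 0 < p - t - 1)
    (c'' : Fin (p-t-1-1) → ℂ) (R'' : Fin (p-t-1-1) → ℝ)
    (hc'' : ∀ u, c'' u = 0) (hR'' : ∀ u, R'' u = ρ (u.1+t+3)) :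
    Continuous fun pr : (↥(Metric.sphere (0:ℂ) (ρ (t+2)))) × (Fin (p-t-1-1) → ℝ) =>
      (∏ k' ∈ Finset.Icc (t+2) p, Gfun q ((n k' : ℤ) - (n (k'-1) : ℤ))
          ((m k' : ℤ) - (m (k'-1) : ℤ)) (a k' - a (k'-1))
          (fext (finIns hk2 pr.1.1 (fun u => circleMap (c'' u) (R'' u) (pr.2 u))) (k'-t-1)))
      * (∏ k' ∈ Finset.Icc (t+2) (p-1),
          (fext (finIns hk2 pr.1.1 (fun u => circleMap (c'' u) (R'' u) (pr.2 u))) (k'-t-1)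
           - fext (finIns hk2 pr.1.1 (fun u => circleMap (c'' u) (R'' u) (pr.2 u))) (k'-t))⁻¹)
      * (fext (finIns hk2 pr.1.1 (fun u => circleMap (c'' u) (R'' u) (pr.2 u))) (p-t-1)
          - ζ2)⁻¹ := by
  obtain ⟨hqs, hs1⟩ := sqrt_facts hq0 hq1
  have hτ10 : 0 < τ1 := lt_trans hτ2 hτ21
  have hρpos : ∀ k, 1 ≤ k → k ≤ p → 0 < ρ k := fun k h1 h2 => lt_trans hτ10 (hρb k h1 h2).1
  -- coordinate continuity and norms
  have hcoord : ∀ idx, 1 ≤ idx → idx ≤ p-t-1 →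
      Continuous (fun pr : (↥(Metric.sphere (0:ℂ) (ρ (t+2)))) × (Fin (p-t-1-1) → ℝ) =>
        fext (finIns hk2 pr.1.1 (fun u => circleMap (c'' u) (R'' u) (pr.2 u))) idx)
      ∧ (∀ pr : (↥(Metric.sphere (0:ℂ) (ρ (t+2)))) × (Fin (p-t-1-1) → ℝ),
          ‖fext (finIns hk2 pr.1.1 (fun u => circleMap (c'' u) (R'' u) (pr.2 u))) idx‖
            = ρ (idx+t+1)) := by
    intro idx h1 h2
    by_cases hidx : idx = 1
    · subst hidx
      constructor
      · have he : (fun pr : (↥(Metric.sphere (0:ℂ) (ρ (t+2)))) × (Fin (p-t-1-1) → ℝ) =>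
            fext (finIns hk2 pr.1.1 (fun u => circleMap (c'' u) (R'' u) (pr.2 u))) 1)
              = fun pr => pr.1.1 := by
          funext pr; rw [fext_finIns_one]
        rw [he]
        exact continuous_subtype_val.comp continuous_fst
      · intro pr
        rw [fext_finIns_one]
        have hmem := pr.1.2
        rw [mem_sphere_zero_iff_norm] at hmem
        rw [hmem]
        exact congrArg ρ (by omega)
    · have h2' : 2 ≤ idx := by omega
      have heval : ∀ pr : (↥(Metric.sphere (0:ℂ) (ρ (t+2)))) × (Fin (p-t-1-1) → ℝ),
          fext (finIns hk2 pr.1.1 (fun u => circleMap (c'' u) (R'' u) (pr.2 u))) idx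
            = circleMap (c'' ⟨idx-2, by omega⟩) (R'' ⟨idx-2, by omega⟩)
                (pr.2 ⟨idx-2, by omega⟩) := by
        intro pr
        rw [fext_finIns_eval hk2 _ _ idx h2' h2]
        rw [fext_eval _ (idx-1) (by omega) (by omega)]
        rfl
      constructor
      · simp only [heval]
        exact (continuous_circleMap _ _).comp ((continuous_apply _).comp continuous_snd)
      · intro pr
        rw [heval pr, hc'', hR'']
        rw [norm_circleMap_zero]
        rw [abs_of_pos (hρpos _ (by omega) (by
          show idx - 2 + t + 3 ≤ p; omega))]
        exact congrArg ρ (show idx-2+t+3 = idx+t+1 by omega)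
  refine Continuous.mul (Continuous.mul ?_ ?_) ?_
  · refine continuous_finset_prod _ (fun k' hk' => ?_)
    simp only [Finset.mem_Icc] at hk'
    have hb := hρb k' (by omega) hk'.2
    obtain ⟨hcont, hnorm⟩ := hcoord (k'-t-1) (by omega) (by omega)
    refine continuous_iff_continuousAt.mpr (fun pr => ?_)
    have hnval : ρ (k'-t-1+t+1) = ρ k' := congrArg ρ (by omega)
    have hzn1 : ‖fext (finIns hk2 pr.1.1 (fun u => circleMap (c'' u) (R'' u) (pr.2 u)))
        (k'-t-1)‖ < 1 := by rw [hnorm pr, hnval]; linarith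
    have hznq : ‖fext (finIns hk2 pr.1.1 (fun u => circleMap (c'' u) (R'' u) (pr.2 u)))
        (k'-t-1)‖ < 1 - q := by rw [hnorm pr, hnval]; linarith
    have hn : (0:ℤ) ≤ (n k' : ℤ) - (n (k'-1) : ℤ) := by
      have := hnmono (k'-1) (by simp [Finset.mem_Icc]; omega)
      rw [show k'-1+1 = k' by omega] at this
      omega
    exact ContinuousAt.comp
      (g := Gfun q ((n k' : ℤ) - (n (k'-1) : ℤ)) ((m k' : ℤ) - (m (k'-1) : ℤ))
        (a k' - a (k'-1)))
      ((Gfun_diffAt hq0 hq1 _ _ _ hn hzn1 hznq).continuousAt) hcont.continuousAt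
  · refine continuous_finset_prod _ (fun k' hk' => ?_)
    simp only [Finset.mem_Icc] at hk'
    obtain ⟨hcont1, hnorm1⟩ := hcoord (k'-t-1) (by omega) (by omega)
    obtain ⟨hcont2, hnorm2⟩ := hcoord (k'-t) (by omega) (by omega)
    refine (hcont1.sub hcont2).inv₀ (fun pr => ?_)
    refine sub_ne_zero.mpr (ne_of_norm_ne ?_)
    rw [hnorm1 pr, hnorm2 pr]
    rw [show k'-t-1+t+1 = k' by omega, show k'-t+t+1 = k'+1 by omega]
    exact hadj k' (by omega) (by omega)
  · obtain ⟨hcont, hnorm⟩ := hcoord (p-t-1) (by omega) (by omega)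
    refine (hcont.sub continuous_const).inv₀ (fun pr => ?_)
    refine sub_ne_zero.mpr (ne_of_norm_ne ?_)
    rw [hnorm pr, hζ2, show p-t-1+t+1 = p by omega]
    have := (hρb p (by omega) le_rfl).1
    linarith


/-- (Lemma `lem:deltazero` of the paper.)  For `δ ≡ 0` (all
`z`-contours around the origin, radii in `(τ_1, 1−√q)` ordered according to `ε`),
the kernel `L^ε_δ` vanishes identically unless `ε = ε^k = (2,…,2,1,…,1)` for some
`1 ≤ k ≤ p`. -/
theorem statement10
    (q : ℝ) (hq0 : 0 < q) (hq1 : q < 1)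
    (p N : ℕ) (hp : 2 ≤ p)
    (n : ℕ → ℕ) (hn0 : n 0 = 0) (hn1 : 1 ≤ n 1)
    (hnmono : ∀ k ∈ Finset.Icc 1 (p - 1), n k < n (k + 1)) (hnp : n p = N)
    (m : ℕ → ℕ) (hm0 : m 0 = 0) (hm1 : 0 < m 1)
    (hmmono : ∀ k ∈ Finset.Icc 1 (p - 1), m k < m (k + 1))
    (a : ℕ → ℤ) (ha0 : a 0 = 0)
    (e : ℕ → ℕ) (he : ∀ k ∈ Finset.Icc 1 (p - 1), e k = 1 ∨ e k = 2)
    (τ1 τ2 : ℝ) (hτ2 : 0 < τ2) (hτ21 : τ2 < τ1) (hτ1 : τ1 < 1 - Real.sqrt q)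
    (ρ : ℕ → ℝ) (hρ : ∀ k ∈ Finset.Icc 1 p, τ1 < ρ k ∧ ρ k < 1 - Real.sqrt q)
    (hρord : ∀ k ∈ Finset.Icc 1 (p - 1),
      (e k = 2 → ρ k < ρ (k + 1)) ∧ (e k = 1 → ρ (k + 1) < ρ k))
    (hne : ¬ ∃ k ∈ Finset.Icc 1 p,
      ∀ t ∈ Finset.Icc 1 (p - 1), e t = if t < k then 2 else 1) :
    ∀ i j : ℕ, 1 ≤ i → i ≤ N → 1 ≤ j → j ≤ N →
      Ldelta q p n m a τ1 τ2 (fun _ => 0) ρ i j = 0 := by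
  intro i j hi hiN hj hjN
  obtain ⟨hqs, hs1⟩ := sqrt_facts hq0 hq1
  have hτ10 : 0 < τ1 := lt_trans hτ2 hτ21
  obtain ⟨t, ht1, ht2, he1, he2⟩ := combi p hp e he hne
  have hρb : ∀ k, 1 ≤ k → k ≤ p → τ1 < ρ k ∧ ρ k < 1 - Real.sqrt q :=
    fun k h1 h2 => hρ k (by simp [Finset.mem_Icc]; omega)
  have hρpos : ∀ k, 1 ≤ k → k ≤ p → 0 < ρ k :=
    fun k h1 h2 => lt_trans hτ10 (hρb k h1 h2).1
  have hord1 : ρ (t+1) < ρ t := (hρord t (by simp [Finset.mem_Icc]; omega)).2 he1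
  have hord2 : ρ (t+1) < ρ (t+2) := (hρord (t+1) (by simp [Finset.mem_Icc]; omega)).1 he2
  have hadj : ∀ k, 1 ≤ k → k ≤ p - 1 → ρ k ≠ ρ (k+1) := by
    intro k h1 h2
    rcases he k (by simp [Finset.mem_Icc]; omega) with h | h
    · exact (((hρord k (by simp [Finset.mem_Icc]; omega)).2 h)).ne'
    · exact (((hρord k (by simp [Finset.mem_Icc]; omega)).1 h)).ne
  unfold Ldelta
  refine cint_eqOn_zero hτ10.le (fun ζ1 hζ1 => ?_)
  refine cint_eqOn_zero hτ2.le (fun ζ2 hζ2 => ?_)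
  rw [mem_sphere_zero_iff_norm] at hζ2
  have hcen : (fun t' : Fin p => if (fun _ : ℕ => (0:ℕ)) (t'.1 + 1) = 1 then (1:ℂ) else 0)
      = fun _ => (0:ℂ) := by
    funext t'; simp
  rw [hcen]
  refine multi_peel t p (by omega) _ _ (fun t' => ?_) _ (fun zv hzv => ?_)
  · have ht' := t'.2
    exact (hρpos (t'.1+1) (by omega) (by omega)).le
  set PSI : (Fin (p - t - 1) → ℂ) → ℂ := fun w =>
    (∏ k' ∈ Finset.Icc (t+2) p, Gfun q ((n k' : ℤ) - (n (k'-1) : ℤ))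
        ((m k' : ℤ) - (m (k'-1) : ℤ)) (a k' - a (k'-1)) (fext w (k'-t-1)))
    * (∏ k' ∈ Finset.Icc (t+2) (p-1), (fext w (k'-t-1) - fext w (k'-t))⁻¹)
    * (fext w (p-t-1) - ζ2)⁻¹ with hPSI
  set CC : ℂ :=
    (∏ k' ∈ Finset.Icc 1 t, Gfun q ((n k' : ℤ) - (n (k'-1) : ℤ))
        ((m k' : ℤ) - (m (k'-1) : ℤ)) (a k' - a (k'-1)) (fext zv k'))
    * (∏ k' ∈ Finset.Icc 1 (t-1), (fext zv k' - fext zv (k'+1))⁻¹)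
    * ((1 - ζ1) / (1 - fext zv 1))
    * (Gfun q (i : ℤ) (mOf p n m i : ℤ) (aOf p n a i) ζ1
       * Gfun q ((n p : ℤ) - j + 1) ((m p : ℤ) - (mOf p n m j : ℤ)) (a p - aOf p n a j) ζ2)⁻¹
    * (fext zv 1 - ζ1)⁻¹ with hCC
  refine multi_vanish_of (p - t) (by omega) _ _ 0 (ρ (t+1)) (fun _ => (0:ℂ))
    (fun u => ρ (u.1 + t + 2)) rfl ?_ (fun u => rfl) ?_ _ ?_
  · exact congrArg ρ (show 0+t+1 = t+1 by omega)
  · intro u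
    exact congrArg ρ (show u.1+1+t+1 = u.1+t+2 by omega)
  refine step_vanish hq0 hq1 ((n (t+1) : ℤ) - (n t : ℤ)) ((m (t+1) : ℤ) - (m t : ℤ))
    (a (t+1) - a t) ?_ (ρ (t+1)) (ρ (t+2)) (fext zv t) CC
    (hρpos (t+1) (by omega) (by omega)) (hρb (t+1) (by omega) (by omega)).2 ?_
    hord2 (p - t - 1) (by omega) _ _ rfl ?_ PSI ?_ _ ?_
  · have := hnmono t (by simp [Finset.mem_Icc]; omega)
    omega
  · -- ρ (t+1) < ‖fext zv t‖
    have hz := hzv ⟨t-1, by omega⟩ (show t-1 < t by omega)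
    rw [mem_sphere_zero_iff_norm] at hz
    rw [fext_eval zv t (by omega) (by omega)]
    rw [hz]
    exact lt_of_lt_of_le hord1 (le_of_eq (congrArg ρ (show t = t-1+1 by omega)))
  · exact congrArg ρ (show 0+t+2 = t+2 by omega)
  · -- CircleIntegrable
    refine ContinuousOn.circleIntegrable (hρpos (t+2) (by omega) (by omega)).le ?_
    rw [continuousOn_iff_continuous_restrict]
    simp only [Set.restrict]
    refine cont_multi _ _ _ _ ?_
    simp only [hPSI]
    exact PSI_cont q τ1 τ2 hq0 hq1 hτ2 hτ21 p t ht1 ht2 n m a hnmono ρ hρb hadj ζ2 hζ2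
      (by omega) _ _ (fun u => rfl)
      (fun u => congrArg ρ (show u.1+1+t+2 = u.1+t+3 by omega))
  · -- the factorization
    intro z w
    simp only [hPSI, hCC]
    rw [hsplit_eval _
      (fun k' => Gfun q ((n k' : ℤ) - (n (k'-1) : ℤ)) ((m k' : ℤ) - (m (k'-1) : ℤ))
        (a k' - a (k'-1)) (fext zv k'))
      (fun k' => Gfun q ((n k' : ℤ) - (n (k'-1) : ℤ)) ((m k' : ℤ) - (m (k'-1) : ℤ))
        (a k' - a (k'-1)) (fext w (k'-t-1)))
      t p ht1 ht2
      (fun k h1 h2 => by rw [fext_merge_low zv _ k h1 h2 (by omega)])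
      (fun k h1 h2 => by rw [fext_merge_high zv _ z w k h1 h2])]
    rw [hsplit_eval2 _
      (fun k' => (fext zv k' - fext zv (k'+1))⁻¹)
      (fun k' => (fext w (k'-t-1) - fext w (k'-t))⁻¹)
      t (p-1) ht1 (by omega)
      (fun k h1 h2 => by rw [fext_merge_low zv _ k h1 (by omega) (by omega),
        fext_merge_low zv _ (k+1) (by omega) (by omega) (by omega)])
      (fun k h1 h2 => by rw [fext_merge_high zv _ z w k h1 (by omega),
        fext_merge_high zv _ z w (k+1) (by omega) (by omega),
        show k+1-t-1 = k-t from by omega])]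
    rw [fext_merge_mid zv _ z w (by omega)]
    rw [fext_merge_low zv _ t ht1 le_rfl (by omega)]
    rw [fext_merge_high zv (by omega) z w (t+1+1) (by omega) (by omega),
        congrArg (fext w) (show t+1+1-t-1 = 1 by omega)]
    rw [fext_merge_high zv _ z w p (by omega) le_rfl]
    rw [fext_merge_low zv _ 1 le_rfl ht1 (by omega)]
    simp only [Nat.add_sub_cancel]
    generalize fext zv t - z = X1
    generalize z - fext w 1 = X2
    generalize fext zv 1 - ζ1 = X3
    generalize fext w (p-t-1) - ζ2 = X4
    generalize (1:ℂ) - fext zv 1 = X5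
    ring

end
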